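/- A subset S of a finite product X₁ × X₂ of nonempty sets is good (i.e., every complex-valued function on S decomposes as f(x₁,x₂) = u₁(x₁) + u₂(x₂) for suitable functions u₁, u₂) if and only if every finite subset of S is good. -/

import Mathlib

open SimpleGraph

namespace Stmt0Aux

variable {V : Type*}

/-- Alternating sum of `F` over the darts of a walk. -/
noncomputable def altSum (G : SimpleGraph V) (F : V → V → ℂ) {u w : V} (p : G.Walk u w) : ℂ :=
  (p.darts.map fun d => F d.toProd.1 d.toProd.2).alternatingSum

@[simp] lemma altSum_nil (G : SimpleGraph V) (F : V → V → ℂ) {u : V} :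
    altSum G F (SimpleGraph.Walk.nil : G.Walk u u) = 0 := rfl

@[simp] lemma altSum_cons (G : SimpleGraph V) (F : V → V → ℂ) {u v w : V}
    (h : G.Adj u v) (p : G.Walk v w) :
    altSum G F (SimpleGraph.Walk.cons h p) = F u v - altSum G F p := by
  simp [altSum, SimpleGraph.Walk.darts_cons]

@[simp] lemma altSum_copy (G : SimpleGraph V) (F : V → V → ℂ) {u w w' : V}
    (p : G.Walk u w) (h : w = w') :
    altSum G F (p.copy rfl h) = altSum G F p := by
  subst h; simp [altSum]

lemma altSum_potential (G : SimpleGraph V) (F : V → V → ℂ) (g : V → ℂ) {u w : V}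
    (p : G.Walk u w)
    (hd : ∀ d ∈ p.darts, F d.toProd.1 d.toProd.2 = g d.toProd.1 + g d.toProd.2) :
    altSum G F p = g u - (-1 : ℂ) ^ p.length * g w := by
  induction p with
  | nil => simp
  | cons h p ih =>
    rename_i a b c
    have h1 := hd ⟨(a, b), h⟩ (by simp [SimpleGraph.Walk.darts_cons])
    have h2 : altSum G F p = g b - (-1 : ℂ) ^ p.length * g c :=
      ih (fun d hdm => hd d (by simp [SimpleGraph.Walk.darts_cons, hdm]))
    simp only [altSum_cons, h2, SimpleGraph.Walk.length_cons]
    rw [h1, pow_succ]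
    ring

lemma walk_length_parity (G : SimpleGraph V) (s : V → ZMod 2)
    (hs : ∀ a b, G.Adj a b → s a + s b = 1) {u w : V} (p : G.Walk u w) :
    (p.length : ZMod 2) = s u + s w := by
  induction p with
  | nil => simp [CharTwo.add_self_eq_zero]
  | cons h p ih =>
    rename_i a b c
    have h1 := hs a b h
    have h2 : (2 : ZMod 2) = 0 := rfl
    simp only [SimpleGraph.Walk.length_cons, Nat.cast_add, Nat.cast_one, ih]
    linear_combination h1 + (1 - s a) * h2

lemma alternatingSum_zero (L : List ℂ) (h : ∀ x ∈ L, x = 0) : L.alternatingSum = 0 := by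
  induction L with
  | nil => rfl
  | cons a t ih =>
    rw [List.alternatingSum_cons]
    rw [h a (by simp), ih (fun x hx => h x (by simp [hx]))]
    ring

lemma alt_hit {α : Type*} (d₀ : α) (F : α → ℂ) (L : List α)
    (hF1 : F d₀ = 1) (hF0 : ∀ x ∈ L, x ≠ d₀ → F x = 0) (hmem : d₀ ∈ L)
    (hnodup : L.Nodup) :
    (L.map F).alternatingSum = 1 ∨ (L.map F).alternatingSum = -1 := by
  induction L with
  | nil => simp at hmem
  | cons a t ih =>
    rw [List.map_cons, List.alternatingSum_cons]
    rcases List.nodup_cons.mp hnodup with ⟨ha, hnt⟩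
    by_cases hae : a = d₀
    · subst hae
      have hz : (t.map F).alternatingSum = 0 := by
        apply alternatingSum_zero
        intro x hx
        simp only [List.mem_map] at hx
        obtain ⟨e, he, rfl⟩ := hx
        exact hF0 e (by simp [he]) (fun h => ha (h ▸ he))
      rw [hF1, hz]
      left; ring
    · have hmt : d₀ ∈ t := by
        rcases List.mem_cons.mp hmem with h | h
        · exact absurd h.symm hae
        · exact h
      have h0 : F a = 0 := hF0 a (by simp) hae
      rcases ih (fun x hx => hF0 x (List.mem_cons_of_mem _ hx)) hmt hnt with h | h <;>
        rw [h0, h] <;> [right; left] <;> ring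

/-- Key lemma for trees: for adjacent `v w` with paths to a common root `r`,
the alternating sums fit together. -/
lemma key (G : SimpleGraph V) (hac : G.IsAcyclic) (F : V → V → ℂ)
    (hF : ∀ a b, F a b = F b a) {v w r : V} (hadj : G.Adj v w)
    (p : G.Walk v r) (hp : p.IsPath) (q : G.Walk w r) (hq : q.IsPath) :
    altSum G F p + altSum G F q = F v w := by
  classical
  have huniq := isAcyclic_iff_path_unique.mp hac
  by_cases hv : v ∈ q.support
  · have h1 : (q.takeUntil v hv).IsPath := hq.takeUntil hv
    have h2 : (SimpleGraph.Walk.cons hadj.symm SimpleGraph.Walk.nil : G.Walk w v).IsPath :=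
      (SimpleGraph.Path.singleton hadj.symm).2
    have hq1 : q.takeUntil v hv = SimpleGraph.Walk.cons hadj.symm SimpleGraph.Walk.nil := by
      have := huniq ⟨_, h1⟩ ⟨_, h2⟩
      exact congrArg Subtype.val this
    have hdrop : (q.dropUntil v hv).IsPath := hq.dropUntil hv
    have hpd : q.dropUntil v hv = p := by
      have := huniq ⟨_, hdrop⟩ ⟨p, hp⟩
      exact congrArg Subtype.val this
    have hq2 : q = SimpleGraph.Walk.cons hadj.symm p := by
      conv_lhs => rw [← q.take_spec hv]
      rw [hq1, hpd]
      rfl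
    rw [hq2, altSum_cons, hF w v]
    ring
  · have hcons : (SimpleGraph.Walk.cons hadj q).IsPath := hq.cons hv
    have hp2 : SimpleGraph.Walk.cons hadj q = p := by
      have := huniq ⟨_, hcons⟩ ⟨p, hp⟩
      exact congrArg Subtype.val this
    rw [← hp2, altSum_cons]
    ring

end Stmt0Aux

section Graph

variable {X₁ X₂ : Type*}

/-- The bipartite graph on `X₁ ⊕ X₂` associated to `S`. -/
def grOf (S : Set (X₁ × X₂)) : SimpleGraph (X₁ ⊕ X₂) where
  Adj a b := (∃ x y, (x, y) ∈ S ∧ a = Sum.inl x ∧ b = Sum.inr y) ∨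
    (∃ x y, (x, y) ∈ S ∧ a = Sum.inr y ∧ b = Sum.inl x)
  symm := by
    constructor
    rintro a b (⟨x, y, hm, rfl, rfl⟩ | ⟨x, y, hm, rfl, rfl⟩)
    · exact Or.inr ⟨x, y, hm, rfl, rfl⟩
    · exact Or.inl ⟨x, y, hm, rfl, rfl⟩
  loopless := by
    constructor
    rintro a (⟨x, y, hm, rfl, h⟩ | ⟨x, y, hm, rfl, h⟩) <;> simp at h

lemma grOf_adj_inl_inr {S : Set (X₁ × X₂)} {x : X₁} {y : X₂} :
    (grOf S).Adj (Sum.inl x) (Sum.inr y) ↔ (x, y) ∈ S := by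
  constructor
  · rintro (⟨a, b, hm, h1, h2⟩ | ⟨a, b, hm, h1, h2⟩)
    · rw [Sum.inl.injEq] at h1; rw [Sum.inr.injEq] at h2; subst h1; subst h2; exact hm
    · simp at h1
  · intro h; exact Or.inl ⟨x, y, h, rfl, rfl⟩

lemma grOf_adj_cases {S : Set (X₁ × X₂)} {a b : X₁ ⊕ X₂} (h : (grOf S).Adj a b) :
    ∃ x y, (x, y) ∈ S ∧ ((a = Sum.inl x ∧ b = Sum.inr y) ∨ (a = Sum.inr y ∧ b = Sum.inl x)) := by
  rcases h with ⟨x, y, hm, h1, h2⟩ | ⟨x, y, hm, h1, h2⟩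
  · exact ⟨x, y, hm, Or.inl ⟨h1, h2⟩⟩
  · exact ⟨x, y, hm, Or.inr ⟨h1, h2⟩⟩

/-- Symmetrized version of `f` on vertices. -/
def Fof (f : X₁ × X₂ → ℂ) : (X₁ ⊕ X₂) → (X₁ ⊕ X₂) → ℂ
  | Sum.inl x, Sum.inr y => f (x, y)
  | Sum.inr y, Sum.inl x => f (x, y)
  | _, _ => 0

lemma Fof_symm (f : X₁ × X₂ → ℂ) (a b : X₁ ⊕ X₂) : Fof f a b = Fof f b a := by
  rcases a with x | y <;> rcases b with x' | y' <;> rfl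

end Graph

/-- S ⊆ X₁ × X₂ is good: every f : S → ℂ decomposes as u₁(x₁) + u₂(x₂). -/
def Good2 {X₁ X₂ : Type*} (S : Set (X₁ × X₂)) : Prop :=
  ∀ f : X₁ × X₂ → ℂ, ∃ (u₁ : X₁ → ℂ) (u₂ : X₂ → ℂ), ∀ p ∈ S, f p = u₁ p.1 + u₂ p.2

/-- S is good iff every finite subset of S is good. -/
theorem stmt_0 {X₁ X₂ : Type*} [Nonempty X₁] [Nonempty X₂] (S : Set (X₁ × X₂)) :
    Good2 S ↔ ∀ T ⊆ S, T.Finite → Good2 T := by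
  classical
  constructor
  · intro h T hTS _ f
    obtain ⟨u₁, u₂, hu⟩ := h f
    exact ⟨u₁, u₂, fun p hp => hu p (hTS hp)⟩
  · intro hT
    set G := grOf S with hG
    -- Step 1: G is acyclic.
    have hac : G.IsAcyclic := by
      intro v c hc
      have h3 := hc.three_le_length
      have hlen : 0 < c.edges.length := by
        rw [SimpleGraph.Walk.length_edges]; omega
      obtain ⟨e₀, he₀⟩ := List.exists_mem_of_ne_nil _ (List.ne_nil_of_length_pos hlen)
      set f : X₁ × X₂ → ℂ := fun p => if s(Sum.inl p.1, Sum.inr p.2) = e₀ then 1 else 0 with hf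
      set T : Set (X₁ × X₂) := {p | s(Sum.inl p.1, Sum.inr p.2) ∈ c.edges} with hTdef
      have hTS : T ⊆ S := by
        intro p hp
        exact grOf_adj_inl_inr.mp (c.adj_of_mem_edges hp)
      have hTfin : T.Finite := by
        have hinj : Function.Injective
            (fun p : X₁ × X₂ => s(Sum.inl p.1, Sum.inr p.2) : X₁ × X₂ → Sym2 (X₁ ⊕ X₂)) := by
          intro p q hpq
          simp only [Sym2.eq, Sym2.rel_iff', Prod.mk.injEq, Prod.swap_prod_mk] at hpq
          rcases hpq with ⟨h1, h2⟩ | ⟨h1, h2⟩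
          · exact Prod.ext (Sum.inl.inj h1) (Sum.inr.inj h2)
          · simp at h1
        have hTeq : T = (fun p : X₁ × X₂ => s(Sum.inl p.1, Sum.inr p.2)) ⁻¹'
            {e | e ∈ c.edges} := rfl
        rw [hTeq]
        exact (c.edges.finite_toSet).preimage hinj.injOn
      obtain ⟨u₁, u₂, hu⟩ := hT T hTS hTfin f
      set g : X₁ ⊕ X₂ → ℂ := Sum.elim u₁ u₂ with hg
      have hpot : ∀ d ∈ c.darts, Fof f d.toProd.1 d.toProd.2 = g d.toProd.1 + g d.toProd.2 := by
        intro d hd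
        obtain ⟨x, y, hm, hcase⟩ := grOf_adj_cases d.adj
        have hedge : d.edge ∈ c.edges := List.mem_map_of_mem hd
        rcases hcase with ⟨h1, h2⟩ | ⟨h1, h2⟩
        · have hmemT : (x, y) ∈ T := by
            show s(Sum.inl x, Sum.inr y) ∈ c.edges
            have : d.edge = s(Sum.inl x, Sum.inr y) := by
              show s(d.toProd.1, d.toProd.2) = _
              rw [h1, h2]
            rwa [this] at hedge
          have := hu (x, y) hmemT
          rw [h1, h2]
          show f (x, y) = g (Sum.inl x) + g (Sum.inr y)
          simpa [hg] using this
        · have hmemT : (x, y) ∈ T := by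
            show s(Sum.inl x, Sum.inr y) ∈ c.edges
            have : d.edge = s(Sum.inl x, Sum.inr y) := by
              show s(d.toProd.1, d.toProd.2) = _
              rw [h1, h2, Sym2.eq_swap]
            rwa [this] at hedge
          have := hu (x, y) hmemT
          rw [h1, h2]
          show f (x, y) = g (Sum.inr y) + g (Sum.inl x)
          rw [add_comm]
          simpa [hg] using this
      have hparity : Even c.length := by
        have hside : ∀ a b, G.Adj a b →
            (Sum.elim (fun _ => (0 : ZMod 2)) (fun _ => 1)) a +
            (Sum.elim (fun _ => (0 : ZMod 2)) (fun _ => 1)) b = 1 := by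
          intro a b hab
          obtain ⟨x, y, _, hcase⟩ := grOf_adj_cases hab
          rcases hcase with ⟨rfl, rfl⟩ | ⟨rfl, rfl⟩ <;> simp
        have := Stmt0Aux.walk_length_parity G _ hside c
        rw [CharTwo.add_self_eq_zero] at this
        rw [Nat.even_iff, ← Nat.dvd_iff_mod_eq_zero]
        exact (ZMod.natCast_eq_zero_iff _ 2).mp this
      have hzero : Stmt0Aux.altSum G (Fof f) c = 0 := by
        rw [Stmt0Aux.altSum_potential G (Fof f) g c hpot, hparity.neg_one_pow]
        ring
      have hedges : c.edges = c.darts.map SimpleGraph.Dart.edge := rfl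
      have hinjdart : ∀ x ∈ c.darts, ∀ y ∈ c.darts, x.edge = y.edge → x = y := by
        have := hc.edges_nodup
        rw [hedges] at this
        exact fun x hx y hy hxy => List.inj_on_of_nodup_map this hx hy hxy
      obtain ⟨d₀, hd₀, hd₀e⟩ : ∃ d ∈ c.darts, d.edge = e₀ := by
        rw [hedges] at he₀
        obtain ⟨d, hd, hde⟩ := List.mem_map.mp he₀
        exact ⟨d, hd, hde⟩
      have hdval : ∀ d : G.Dart, (d.edge = e₀ → Fof f d.toProd.1 d.toProd.2 = 1) ∧
          (d.edge ≠ e₀ → Fof f d.toProd.1 d.toProd.2 = 0) := by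
        intro d
        obtain ⟨x, y, _, hcase⟩ := grOf_adj_cases d.adj
        have hde : d.edge = s(Sum.inl x, Sum.inr y) := by
          show s(d.toProd.1, d.toProd.2) = _
          rcases hcase with ⟨h1, h2⟩ | ⟨h1, h2⟩
          · rw [h1, h2]
          · rw [h1, h2, Sym2.eq_swap]
        have hFofval : Fof f d.toProd.1 d.toProd.2 = f (x, y) := by
          rcases hcase with ⟨h1, h2⟩ | ⟨h1, h2⟩ <;> rw [h1, h2] <;> rfl
        constructor
        · intro h
          rw [hFofval, hf]
          simp only
          rw [if_pos (by rw [← hde]; exact h)]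
        · intro h
          rw [hFofval, hf]
          simp only
          rw [if_neg (by rw [← hde]; exact h)]
      have hdnodup : c.darts.Nodup := by
        have := hc.edges_nodup
        rw [hedges] at this
        exact this.of_map _
      have hhit := Stmt0Aux.alt_hit d₀ (fun d : G.Dart => Fof f d.toProd.1 d.toProd.2)
        c.darts ((hdval d₀).1 hd₀e)
        (fun x hx hxd => (hdval x).2 (fun he => hxd (hinjdart x hx d₀ hd₀ (he.trans hd₀e.symm))))
        hd₀ hdnodup
      rw [show (c.darts.map fun d : G.Dart => Fof f d.toProd.1 d.toProd.2).alternatingSum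
          = Stmt0Aux.altSum G (Fof f) c from rfl, hzero] at hhit
      rcases hhit with h | h <;> norm_num at h
    -- Step 2: acyclic implies Good2 S.
    intro f
    set F := Fof f with hF
    have hreach : ∀ v : X₁ ⊕ X₂, G.Reachable v (G.connectedComponentMk v).out := by
      intro v
      have h1 : G.connectedComponentMk ((G.connectedComponentMk v).out)
          = G.connectedComponentMk v := (G.connectedComponentMk v).out_eq
      exact (SimpleGraph.ConnectedComponent.eq.mp h1).symm
    set P : ∀ v : X₁ ⊕ X₂, G.Path v (G.connectedComponentMk v).out :=
      fun v => ((hreach v).some).toPath with hP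
    set g : X₁ ⊕ X₂ → ℂ := fun v => Stmt0Aux.altSum G F (P v).1 with hg
    have hcons : ∀ a b, G.Adj a b → g a + g b = F a b := by
      intro a b hadj
      have hroot : (G.connectedComponentMk b).out = (G.connectedComponentMk a).out := by
        rw [SimpleGraph.ConnectedComponent.sound hadj.symm.reachable]
      have hq : ((P b).1.copy rfl hroot).IsPath :=
        (SimpleGraph.Walk.isPath_copy _ rfl hroot).mpr (P b).2
      have := Stmt0Aux.key G hac F (Fof_symm f) hadj
        (P a).1 (P a).2 ((P b).1.copy rfl hroot) hq
      rw [Stmt0Aux.altSum_copy] at this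
      exact this
    refine ⟨fun x => g (Sum.inl x), fun y => g (Sum.inr y), ?_⟩
    intro p hp
    have hadj : G.Adj (Sum.inl p.1) (Sum.inr p.2) := grOf_adj_inl_inr.mpr hp
    have := hcons _ _ hadj
    show f p = g (Sum.inl p.1) + g (Sum.inr p.2)
    rw [this]
    rfl
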